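/- Let T be a Marco–Martens map on the probability space (X, ℬ, m) with Marco–Martens cover {X_j}_{j≥0}, let l_B be a Banach limit, and let μ be the set function defined by μ(A) := Σ_{j=0}^∞ l_B((m_n(A ∩ Y_j))_{n≥1}) for measurable A ⊆ X. If A ⊆ X is measurable and the sequence (m_n(A))_{n≥1} is bounded, then the limit lim_{l→∞} l_B((m_n(A ∩ ⋃_{j=l}^∞ Y_j))_{n≥1}) exists and μ(A) = l_B((m_n(A))_{n≥1}) − lim_{l→∞} l_B((m_n(A ∩ ⋃_{j=l}^∞ Y_j))_{n≥1}). -/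

import Mathlib

open MeasureTheory Set Filter

/-- `MMY Xs j = Y_j := X_j \ ⋃_{i < j} X_i`. -/
def MMY {X : Type*} (Xs : ℕ → Set X) (j : ℕ) : Set X := Xs j \ ⋃ i ∈ Set.Iio j, Xs i

/-- `T` is a Marco–Martens map on the probability space `(X, ℬ, m)` with Marco–Martens cover
`(X_j)_{j ≥ 0}` and constants `(K_j)_{j ≥ 0}` (condition (4)): `T` is measurable, maps
measurable sets to measurable sets, `m` is quasi-invariant under `T`, and conditions
(2)–(6) of the definition hold. -/
structure MarcoMartens {X : Type*} [MeasurableSpace X] (m : Measure X) (T : X → X)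
    (Xs : ℕ → Set X) (K : ℕ → ℝ) : Prop where
  measurable_T : Measurable T
  image_meas : ∀ A : Set X, MeasurableSet A → MeasurableSet (T '' A)
  quasi_invariant : m.map T ≪ m
  meas_Xs : ∀ j, MeasurableSet (Xs j)
  cover : m (univ \ ⋃ n, Xs n) = 0
  cond3 : ∀ i j : ℕ, ∃ k : ℕ, 0 < m (Xs i ∩ T^[k] ⁻¹' Xs j)
  one_le_K : ∀ j, 1 ≤ K j
  cond4 : ∀ j : ℕ, ∀ A B : Set X, MeasurableSet A → MeasurableSet B →
    A ⊆ Xs j → B ⊆ Xs j → ∀ n : ℕ,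
    m (T^[n] ⁻¹' A) * m B ≤ ENNReal.ofReal (K j) * (m A * m (T^[n] ⁻¹' B))
  cond5 : ∑' n : ℕ, m (T^[n] ⁻¹' Xs 0) = ⊤
  cond6 : Tendsto (fun l : ℕ => m (T '' ⋃ j ∈ Set.Ici l, MMY Xs j)) atTop (nhds 0)

/-- `mseq m T Xs A n = m_n(A) := (Σ_{k=0}^n m(T^{-k}A)) / (Σ_{k=0}^n m(T^{-k}X_0))`. -/
noncomputable def mseq {X : Type*} [MeasurableSpace X] (m : Measure X) (T : X → X)
    (Xs : ℕ → Set X) (A : Set X) (n : ℕ) : ℝ :=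
  (∑ k ∈ Finset.range (n + 1), (m (T^[k] ⁻¹' A)).toReal) /
    (∑ k ∈ Finset.range (n + 1), (m (T^[k] ⁻¹' Xs 0)).toReal)

/-- `lB` is a Banach limit: a positive, normalized, shift-invariant linear functional on the
space of bounded real sequences. -/
structure IsBanachLimit (lB : (ℕ → ℝ) → ℝ) : Prop where
  map_add : ∀ x y : ℕ → ℝ, (∃ C, ∀ n, |x n| ≤ C) → (∃ C, ∀ n, |y n| ≤ C) →
    lB (x + y) = lB x + lB y
  map_smul : ∀ (c : ℝ) (x : ℕ → ℝ), (∃ C, ∀ n, |x n| ≤ C) → lB (c • x) = c * lB x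
  nonneg : ∀ x : ℕ → ℝ, (∃ C, ∀ n, |x n| ≤ C) → (∀ n, 0 ≤ x n) → 0 ≤ lB x
  map_one : lB (fun _ => 1) = 1
  shift_invariant : ∀ x : ℕ → ℝ, (∃ C, ∀ n, |x n| ≤ C) → lB (fun n => x (n + 1)) = lB x

/-- `MMmu m T Xs lB A = μ(A) := Σ_{j=0}^∞ lB((m_n(A ∩ Y_j))_{n ≥ 1})`. -/
noncomputable def MMmu {X : Type*} [MeasurableSpace X] (m : Measure X) (T : X → X)
    (Xs : ℕ → Set X) (lB : (ℕ → ℝ) → ℝ) (A : Set X) : ℝ :=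
  ∑' j : ℕ, lB (fun n => mseq m T Xs (A ∩ MMY Xs j) (n + 1))

section helpers

set_option linter.unusedSectionVars false

variable {X : Type*} [MeasurableSpace X] (m : Measure X) [IsProbabilityMeasure m]
  (T : X → X) (Xs : ℕ → Set X)

lemma MMY_subset (j : ℕ) : MMY Xs j ⊆ Xs j := diff_subset

lemma MMY_meas (h : ∀ j, MeasurableSet (Xs j)) (j : ℕ) : MeasurableSet (MMY Xs j) :=
  (h j).diff (MeasurableSet.biUnion (to_countable _) fun i _ => h i)

lemma MMY_disjoint : Pairwise (Function.onFun Disjoint (MMY Xs)) := by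
  intro i j hij
  wlog h : i < j generalizing i j
  · exact (this hij.symm (lt_of_le_of_ne (not_lt.1 h) hij.symm)).symm
  refine Set.disjoint_left.2 fun x hxi hxj => ?_
  exact hxj.2 (Set.mem_biUnion h hxi.1)

lemma iUnion_MMY : ⋃ j, MMY Xs j = ⋃ j, Xs j := by
  apply Set.Subset.antisymm
  · exact Set.iUnion_mono fun j => MMY_subset Xs j
  · intro x hx
    classical
    have h : ∃ j, x ∈ Xs j := Set.mem_iUnion.1 hx
    refine Set.mem_iUnion.2 ⟨Nat.find h, Nat.find_spec h, fun hmem => ?_⟩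
    obtain ⟨i, hi⟩ := Set.mem_iUnion.1 hmem
    obtain ⟨hi', hxi⟩ := Set.mem_iUnion.1 hi
    exact Nat.find_min h hi' hxi

lemma preimage_iterate_null (hT : Measurable T) (hqi : m.map T ≪ m)
    {N : Set X} (hN : MeasurableSet N) (h0 : m N = 0) (k : ℕ) :
    m (T^[k] ⁻¹' N) = 0 := by
  induction k with
  | zero => simpa using h0
  | succ k ih =>
    rw [Function.iterate_succ, Set.preimage_comp]
    have hmeas : MeasurableSet (T^[k] ⁻¹' N) := (hT.iterate k) hN
    have := hqi ih
    rwa [Measure.map_apply hT hmeas] at this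

lemma mseq_nonneg (A : Set X) (n : ℕ) : 0 ≤ mseq m T Xs A n :=
  div_nonneg (Finset.sum_nonneg fun _ _ => ENNReal.toReal_nonneg)
    (Finset.sum_nonneg fun _ _ => ENNReal.toReal_nonneg)

lemma mseq_mono {A B : Set X} (h : A ⊆ B) (n : ℕ) :
    mseq m T Xs A n ≤ mseq m T Xs B n := by
  unfold mseq
  rw [div_eq_mul_inv, div_eq_mul_inv]
  refine mul_le_mul_of_nonneg_right ?_ (by positivity)
  refine Finset.sum_le_sum fun k _ => ?_
  exact ENNReal.toReal_mono (measure_ne_top m _)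
    (measure_mono (Set.preimage_mono h))

/-- per-k measure splitting -/
lemma key_k {K : ℕ → ℝ} (hMM : MarcoMartens m T Xs K) {A : Set X} (hA : MeasurableSet A)
    (l k : ℕ) :
    (m (T^[k] ⁻¹' A)).toReal
      = (∑ j ∈ Finset.range l, (m (T^[k] ⁻¹' (A ∩ MMY Xs j))).toReal)
        + (m (T^[k] ⁻¹' (A ∩ ⋃ j ∈ Set.Ici l, MMY Xs j))).toReal := by
  have hT := hMM.measurable_T
  have hYmeas := MMY_meas Xs hMM.meas_Xs
  set U : Set X := ⋃ j, MMY Xs j with hU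
  -- m (A \ U) = 0
  have hAU0 : m (A \ U) = 0 := by
    refine measure_mono_null ?_ hMM.cover
    intro x hx
    refine ⟨trivial, fun hmem => hx.2 ?_⟩
    rw [hU, iUnion_MMY]
    exact hmem
  have hAUmeas : MeasurableSet (A \ U) :=
    hA.diff (MeasurableSet.iUnion fun j => hYmeas j)
  have hk0 : m (T^[k] ⁻¹' (A \ U)) = 0 :=
    preimage_iterate_null m T hT hMM.quasi_invariant hAUmeas hAU0 k
  -- m(T^{-k}A) = m(T^{-k}(A∩U))
  have hstep1 : m (T^[k] ⁻¹' A) = m (T^[k] ⁻¹' (A ∩ U)) := by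
    apply le_antisymm
    · calc m (T^[k] ⁻¹' A) = m (T^[k] ⁻¹' (A ∩ U) ∪ T^[k] ⁻¹' (A \ U)) := by
            rw [← Set.preimage_union, Set.inter_union_diff]
        _ ≤ m (T^[k] ⁻¹' (A ∩ U)) + m (T^[k] ⁻¹' (A \ U)) := measure_union_le _ _
        _ = m (T^[k] ⁻¹' (A ∩ U)) := by rw [hk0, add_zero]
    · exact measure_mono (Set.preimage_mono (Set.inter_subset_left))
  -- split A ∩ U
  have hsplit : A ∩ U = (⋃ j ∈ Finset.range l, (A ∩ MMY Xs j))
      ∪ (A ∩ ⋃ j ∈ Set.Ici l, MMY Xs j) := by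
    ext x
    simp only [Set.mem_inter_iff, Set.mem_iUnion, Set.mem_union, Finset.mem_range,
      Set.mem_Ici, hU]
    constructor
    · rintro ⟨hxA, j, hxj⟩
      rcases lt_or_ge j l with h | h
      · exact Or.inl ⟨j, h, hxA, hxj⟩
      · exact Or.inr ⟨hxA, j, h, hxj⟩
    · rintro (⟨j, _, hxA, hxj⟩ | ⟨hxA, j, _, hxj⟩) <;> exact ⟨hxA, j, hxj⟩
  have hRmeas : MeasurableSet (⋃ j ∈ Set.Ici l, MMY Xs j) :=
    MeasurableSet.biUnion (to_countable _) fun j _ => hYmeas j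
  -- disjointness of the two parts
  have hdisj : Disjoint (⋃ j ∈ Finset.range l, (A ∩ MMY Xs j))
      (A ∩ ⋃ j ∈ Set.Ici l, MMY Xs j) := by
    refine Set.disjoint_left.2 fun x hx1 hx2 => ?_
    obtain ⟨j, hjl, _, hxj⟩ := by
      simpa only [Set.mem_iUnion, Finset.mem_range, Set.mem_inter_iff] using hx1
    obtain ⟨i, hil, hxi⟩ := by
      simpa only [Set.mem_iUnion, Set.mem_Ici] using hx2.2
    exact Set.disjoint_left.1 (MMY_disjoint Xs (show j ≠ i by omega)) hxj hxi
  have hmeas2 : MeasurableSet (T^[k] ⁻¹' (A ∩ ⋃ j ∈ Set.Ici l, MMY Xs j)) :=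
    (hT.iterate k) (hA.inter hRmeas)
  have hstep2 : m (T^[k] ⁻¹' (A ∩ U))
      = (∑ j ∈ Finset.range l, m (T^[k] ⁻¹' (A ∩ MMY Xs j)))
        + m (T^[k] ⁻¹' (A ∩ ⋃ j ∈ Set.Ici l, MMY Xs j)) := by
    rw [hsplit, Set.preimage_union]
    rw [measure_union (Disjoint.preimage _ hdisj) hmeas2]
    congr 1
    have : T^[k] ⁻¹' (⋃ j ∈ Finset.range l, (A ∩ MMY Xs j))
        = ⋃ j ∈ Finset.range l, T^[k] ⁻¹' (A ∩ MMY Xs j) := by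
      simp [Set.preimage_iUnion]
    rw [this]
    refine measure_biUnion_finset ?_ fun j _ => (hT.iterate k) (hA.inter (hYmeas j))
    intro i _ j _ hij
    exact Disjoint.preimage _ ((MMY_disjoint Xs hij).mono
      (Set.inter_subset_right) (Set.inter_subset_right))
  rw [hstep1, hstep2, ENNReal.toReal_add
    (ENNReal.sum_lt_top.2 fun j _ => measure_lt_top m _).ne (measure_ne_top m _),
    ENNReal.toReal_sum fun j _ => measure_ne_top m _]
lemma mseq_split {K : ℕ → ℝ} (hMM : MarcoMartens m T Xs K) {A : Set X}
    (hA : MeasurableSet A) (l n : ℕ) :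
    mseq m T Xs A n = (∑ j ∈ Finset.range l, mseq m T Xs (A ∩ MMY Xs j) n)
      + mseq m T Xs (A ∩ ⋃ j ∈ Set.Ici l, MMY Xs j) n := by
  unfold mseq
  rw [← Finset.sum_div, ← add_div]
  congr 1
  calc ∑ k ∈ Finset.range (n + 1), (m (T^[k] ⁻¹' A)).toReal
      = ∑ k ∈ Finset.range (n + 1),
          ((∑ j ∈ Finset.range l, (m (T^[k] ⁻¹' (A ∩ MMY Xs j))).toReal)
            + (m (T^[k] ⁻¹' (A ∩ ⋃ j ∈ Set.Ici l, MMY Xs j))).toReal) :=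
        Finset.sum_congr rfl fun k _ => key_k m T Xs hMM hA l k
    _ = _ := by rw [Finset.sum_add_distrib, Finset.sum_comm]

lemma lB_finsum {lB : (ℕ → ℝ) → ℝ} (hlB : IsBanachLimit lB) (l : ℕ) (f : ℕ → ℕ → ℝ)
    (hb : ∀ i, ∃ C, ∀ n, |f i n| ≤ C) :
    lB (fun n => ∑ i ∈ Finset.range l, f i n) = ∑ i ∈ Finset.range l, lB (f i) := by
  have hbsum : ∀ s : Finset ℕ, ∃ C, ∀ n, |∑ i ∈ s, f i n| ≤ C := by
    intro s
    choose C hC using hb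
    refine ⟨∑ i ∈ s, C i, fun n => ?_⟩
    exact (Finset.abs_sum_le_sum_abs _ _).trans (Finset.sum_le_sum fun i _ => hC i n)
  induction l with
  | zero =>
    have h := hlB.map_smul 0 (fun _ => 1) ⟨1, fun n => by simp⟩
    simp at h ⊢
    exact h
  | succ l ih =>
    rw [Finset.sum_range_succ]
    have : (fun n => ∑ i ∈ Finset.range (l + 1), f i n)
        = (fun n => ∑ i ∈ Finset.range l, f i n) + f l := by
      funext n; simp [Finset.sum_range_succ]
    rw [this, hlB.map_add _ _ (hbsum (Finset.range l)) (hb l), ih]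

end helpers

/-- For a Marco–Martens map and a Banach limit `lB`: if `A` is measurable and the sequence
`(m_n(A))_{n ≥ 1}` is bounded, then `lim_{l → ∞} lB((m_n(A ∩ ⋃_{j ≥ l} Y_j))_{n ≥ 1})` exists
and `μ(A) = lB((m_n(A))_{n ≥ 1}) − lim_{l → ∞} lB((m_n(A ∩ ⋃_{j ≥ l} Y_j))_{n ≥ 1})`. -/
theorem stmt12 {X : Type*} [MeasurableSpace X] (m : Measure X) [IsProbabilityMeasure m]
    (T : X → X) (Xs : ℕ → Set X) (K : ℕ → ℝ) (hMM : MarcoMartens m T Xs K)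
    (lB : (ℕ → ℝ) → ℝ) (hlB : IsBanachLimit lB)
    (A : Set X) (hA : MeasurableSet A)
    (hbdd : ∃ C : ℝ, ∀ n : ℕ, 1 ≤ n → mseq m T Xs A n ≤ C) :
    Tendsto
      (fun l : ℕ => lB (fun n => mseq m T Xs (A ∩ ⋃ j ∈ Set.Ici l, MMY Xs j) (n + 1)))
      atTop
      (nhds (lB (fun n => mseq m T Xs A (n + 1)) - MMmu m T Xs lB A)) := by
  obtain ⟨C, hC⟩ := hbdd
  -- boundedness of all the relevant sequences
  have hsub : ∀ S : Set X, S ⊆ A → ∃ C', ∀ n, |mseq m T Xs S (n + 1)| ≤ C' := by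
    intro S hS
    refine ⟨C, fun n => ?_⟩
    rw [abs_of_nonneg (mseq_nonneg m T Xs S (n + 1))]
    exact (mseq_mono m T Xs hS (n + 1)).trans (hC (n + 1) (by omega))
  set t : ℕ → ℝ := fun j => lB (fun n => mseq m T Xs (A ∩ MMY Xs j) (n + 1)) with ht
  set s : ℕ → ℝ := fun l =>
    lB (fun n => mseq m T Xs (A ∩ ⋃ j ∈ Set.Ici l, MMY Xs j) (n + 1)) with hs
  set L : ℝ := lB (fun n => mseq m T Xs A (n + 1)) with hL
  have key : ∀ l : ℕ, L = (∑ j ∈ Finset.range l, t j) + s l := by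
    intro l
    have h1 : (fun n => mseq m T Xs A (n + 1))
        = (fun n => ∑ j ∈ Finset.range l, mseq m T Xs (A ∩ MMY Xs j) (n + 1))
          + (fun n => mseq m T Xs (A ∩ ⋃ j ∈ Set.Ici l, MMY Xs j) (n + 1)) := by
      funext n
      exact mseq_split m T Xs hMM hA l (n + 1)
    have hb1 : ∃ C', ∀ n, |∑ j ∈ Finset.range l, mseq m T Xs (A ∩ MMY Xs j) (n + 1)| ≤ C' := by
      refine ⟨l * C, fun n => ?_⟩
      calc |∑ j ∈ Finset.range l, mseq m T Xs (A ∩ MMY Xs j) (n + 1)|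
          ≤ ∑ j ∈ Finset.range l, |mseq m T Xs (A ∩ MMY Xs j) (n + 1)| :=
            Finset.abs_sum_le_sum_abs _ _
        _ ≤ ∑ _j ∈ Finset.range l, C := Finset.sum_le_sum fun j _ => by
            obtain ⟨C', hC'⟩ := hsub (A ∩ MMY Xs j) Set.inter_subset_left
            rw [abs_of_nonneg (mseq_nonneg m T Xs _ _)]
            exact (mseq_mono m T Xs Set.inter_subset_left (n + 1)).trans
              (hC (n + 1) (by omega))
        _ = l * C := by simp [mul_comm]
    rw [hL, h1, hlB.map_add _ _ hb1 (hsub _ Set.inter_subset_left),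
      lB_finsum hlB l _ (fun j => hsub _ Set.inter_subset_left), hs]
  have ht_nonneg : ∀ j, 0 ≤ t j := fun j =>
    hlB.nonneg _ (hsub _ Set.inter_subset_left) fun n => mseq_nonneg m T Xs _ _
  have hs_nonneg : ∀ l, 0 ≤ s l := fun l =>
    hlB.nonneg _ (hsub _ Set.inter_subset_left) fun n => mseq_nonneg m T Xs _ _
  have hsummable : Summable t := by
    refine summable_of_sum_range_le (c := L) ht_nonneg fun l => ?_
    have := key l
    linarith [hs_nonneg l]
  have hMMmu : MMmu m T Xs lB A = ∑' j, t j := rfl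
  have hseq : (fun l : ℕ =>
      lB (fun n => mseq m T Xs (A ∩ ⋃ j ∈ Set.Ici l, MMY Xs j) (n + 1)))
      = fun l => L - ∑ j ∈ Finset.range l, t j := by
    funext l
    have := key l
    simp only [hs] at *
    linarith
  show Tendsto s atTop (nhds (L - MMmu m T Xs lB A))
  rw [hMMmu]
  have hseq' : s = fun l => L - ∑ j ∈ Finset.range l, t j := hseq
  rw [hseq']
  exact Tendsto.const_sub L hsummable.hasSum.tendsto_sum_nat
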